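/- arXiv:1611.04219 — 2 statements merged into one kernel-verified Lean document; each statement's English description precedes it below -/
import Mathlib

section
/- Let M = [[L1, L2],[L2^T, L3]] be a real symmetric block matrix with L1 nonsingular, and let S = L3 - L2^T L1^{-1} L2. Then the block matrix X with (1,1)-block L1^{-1} + L1^{-1} L2 S^# L2^T L1^{-1}, (1,2)-block -L1^{-1} L2 S^#, (2,1)-block -S^# L2^T L1^{-1}, and (2,2)-block S^# is a symmetric {1}-inverse of M, i.e., M X M = M and X^T = X. -/
open Matrix

lemma group_inv_unique {R : Type*} [Monoid R] (S X Y : R)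
    (hX1 : S*X*S = S) (hX2 : X*S*X = X) (hX3 : S*X = X*S)
    (hY1 : S*Y*S = S) (hY2 : Y*S*Y = Y) (hY3 : S*Y = Y*S) : X = Y := by
  have h1 : S*X = S*Y := by
    have a : S*Y = (S*X)*(S*Y) := by
      calc S*Y = (S*X*S)*Y := by rw [hX1]
        _ = (S*X)*(S*Y) := by rw [mul_assoc]
    have b : S*X = (S*X)*(S*Y) := by
      calc S*X = X*S := hX3
        _ = X*(S*Y*S) := by rw [hY1]
        _ = (X*S)*(Y*S) := by simp only [mul_assoc]
        _ = (S*X)*(S*Y) := by rw [hX3, hY3]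
    rw [b, ← a]
  have h2 : X*S = Y*S := by rw [← hX3, ← hY3, h1]
  calc X = X*S*X := hX2.symm
    _ = (Y*S)*X := by rw [h2]
    _ = Y*(S*X) := by rw [mul_assoc]
    _ = Y*(S*Y) := by rw [h1]
    _ = Y := by rw [← mul_assoc, hY2]

/-- For a real symmetric block matrix `M = [[L1, L2], [L2ᵀ, L3]]` with `L1` nonsingular and
`S = L3 - L2ᵀ L1⁻¹ L2`, with `Sp` the group inverse of `S`, the block matrix
`X = [[L1⁻¹ + L1⁻¹ L2 Sp L2ᵀ L1⁻¹, -L1⁻¹ L2 Sp], [-Sp L2ᵀ L1⁻¹, Sp]]`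
is a symmetric `{1}`-inverse of `M`. -/
theorem stmt5 {n m : Type*} [Fintype n] [Fintype m] [DecidableEq n] [DecidableEq m]
    (L1 : Matrix n n ℝ) (L2 : Matrix n m ℝ) (L3 : Matrix m m ℝ)
    (hL1 : L1ᵀ = L1) (hL3 : L3ᵀ = L3) (hL1inv : IsUnit L1.det)
    (Sp : Matrix m m ℝ)
    (hSp : (L3 - L2ᵀ * L1⁻¹ * L2) * Sp * (L3 - L2ᵀ * L1⁻¹ * L2) = L3 - L2ᵀ * L1⁻¹ * L2 ∧
      Sp * (L3 - L2ᵀ * L1⁻¹ * L2) * Sp = Sp ∧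
      (L3 - L2ᵀ * L1⁻¹ * L2) * Sp = Sp * (L3 - L2ᵀ * L1⁻¹ * L2)) :
    (Matrix.fromBlocks
        (L1⁻¹ + L1⁻¹ * L2 * Sp * L2ᵀ * L1⁻¹) (-(L1⁻¹ * L2 * Sp))
        (-(Sp * L2ᵀ * L1⁻¹)) Sp)ᵀ =
      Matrix.fromBlocks
        (L1⁻¹ + L1⁻¹ * L2 * Sp * L2ᵀ * L1⁻¹) (-(L1⁻¹ * L2 * Sp))
        (-(Sp * L2ᵀ * L1⁻¹)) Sp ∧
    Matrix.fromBlocks L1 L2 L2ᵀ L3 *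
        Matrix.fromBlocks
          (L1⁻¹ + L1⁻¹ * L2 * Sp * L2ᵀ * L1⁻¹) (-(L1⁻¹ * L2 * Sp))
          (-(Sp * L2ᵀ * L1⁻¹)) Sp *
        Matrix.fromBlocks L1 L2 L2ᵀ L3 =
      Matrix.fromBlocks L1 L2 L2ᵀ L3 := by
  have hB1 : L1 * L1⁻¹ = 1 := Matrix.mul_nonsing_inv L1 hL1inv
  have hB2 : L1⁻¹ * L1 = 1 := Matrix.nonsing_inv_mul L1 hL1inv
  have hBt : (L1⁻¹)ᵀ = L1⁻¹ := by rw [Matrix.transpose_nonsing_inv, hL1]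
  have hS : (L3 - L2ᵀ * L1⁻¹ * L2)ᵀ = L3 - L2ᵀ * L1⁻¹ * L2 := by
    simp [Matrix.transpose_sub, Matrix.transpose_mul, hL3, hBt, Matrix.mul_assoc]
  obtain ⟨hSp1, hSp2, hSp3⟩ := hSp
  set S := L3 - L2ᵀ * L1⁻¹ * L2 with hSdef
  have c1 : S * Spᵀ * S = S := by
    have h := congrArg Matrix.transpose hSp1
    simpa [Matrix.transpose_mul, hS, Matrix.mul_assoc] using h
  have c2 : Spᵀ * S * Spᵀ = Spᵀ := by
    have h := congrArg Matrix.transpose hSp2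
    simpa [Matrix.transpose_mul, hS, Matrix.mul_assoc] using h
  have c3 : S * Spᵀ = Spᵀ * S := by
    have h := congrArg Matrix.transpose hSp3
    simpa [Matrix.transpose_mul, hS, Matrix.mul_assoc] using h.symm
  have hSpT : Spᵀ = Sp := group_inv_unique S Spᵀ Sp c1 c2 c3 hSp1 hSp2 hSp3
  have hc : ∀ (X : Matrix n n ℝ), X * L1⁻¹ * L1 = X := fun X => by
    rw [Matrix.mul_assoc, hB2, Matrix.mul_one]
  have hc' : ∀ (X : Matrix m n ℝ), X * L1⁻¹ * L1 = X := fun X => by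
    rw [Matrix.mul_assoc, hB2, Matrix.mul_one]
  constructor
  · rw [Matrix.fromBlocks_transpose]
    refine Matrix.fromBlocks_inj.mpr ⟨?_, ?_, ?_, ?_⟩ <;>
      simp [Matrix.transpose_add, Matrix.transpose_mul, Matrix.transpose_neg,
        Matrix.transpose_transpose, hSpT, hBt, Matrix.mul_assoc]
  · rw [Matrix.fromBlocks_multiply, Matrix.fromBlocks_multiply]
    refine Matrix.fromBlocks_inj.mpr ⟨?_, ?_, ?_, ?_⟩
    · simp only [Matrix.mul_add, Matrix.add_mul, Matrix.mul_neg, Matrix.neg_mul,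
        ← Matrix.mul_assoc]
      simp only [hB1, hB2, hc, hc', Matrix.one_mul]
      abel
    · simp only [Matrix.mul_add, Matrix.add_mul, Matrix.mul_neg, Matrix.neg_mul,
        ← Matrix.mul_assoc]
      simp only [hB1, hB2, hc, hc', Matrix.one_mul]
      abel
    · simp only [Matrix.mul_add, Matrix.add_mul, Matrix.mul_neg, Matrix.neg_mul,
        ← Matrix.mul_assoc]
      simp only [hB1, hB2, hc, hc', Matrix.one_mul]
      abel
    · have key : (L2ᵀ * (L1⁻¹ + L1⁻¹ * L2 * Sp * L2ᵀ * L1⁻¹) + L3 * -(Sp * L2ᵀ * L1⁻¹)) * L2 +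
          (L2ᵀ * -(L1⁻¹ * L2 * Sp) + L3 * Sp) * L3 =
          L2ᵀ * L1⁻¹ * L2 +
            (L3 - L2ᵀ * L1⁻¹ * L2) * Sp * (L3 - L2ᵀ * L1⁻¹ * L2) := by
        simp only [Matrix.mul_add, Matrix.add_mul, Matrix.mul_neg, Matrix.neg_mul,
          Matrix.sub_mul, Matrix.mul_sub, ← Matrix.mul_assoc]
        abel
      rw [key, hSp1, hSdef]
      abel
end

section
/- Let G1 and G2 be graphs, with G2 arbitrary. In the corona-vertex of the subdivision graph G1◇G2, the resistance distance between any two vertices i, j of the G1-part equals (L_{G1}^#)_{ii} + (L_{G1}^#)_{jj} - 2(L_{G1}^#)_{ij}; in particular it equals r_{ij}(G1). -/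
open Matrix
open scoped Classical

/-- `X` is the group inverse of `M`. -/
def IsGroupInv {n : Type*} [Fintype n] [DecidableEq n] (M X : Matrix n n ℝ) : Prop :=
  M * X * M = M ∧ X * M * X = X ∧ M * X = X * M

/-- The corona-vertex of the subdivision graph, `G1 ◇ G2`: take `G1` together with one copy of
the subdivision graph `S(G2)` for each vertex `i` of `G1` (a copy of `S(G2)` has the vertices of
`G2` together with one new vertex for each edge of `G2`, each new vertex joined to the two
endpoints of its edge), and join the `i`-th vertex of `G1` to every vertex of `V(G2)` in the
`i`-th copy. -/
def coronaVertex {V1 V2 : Type*} (G1 : SimpleGraph V1) (G2 : SimpleGraph V2) :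
    SimpleGraph (V1 ⊕ (V1 × V2) ⊕ (V1 × G2.edgeSet)) :=
  SimpleGraph.fromRel (fun a b =>
    match a, b with
    | Sum.inl i, Sum.inl j => G1.Adj i j
    | Sum.inl i, Sum.inr (Sum.inl (k, _)) => i = k
    | Sum.inr (Sum.inl (i, v)), Sum.inr (Sum.inr (k, e)) => i = k ∧ v ∈ (e : Sym2 V2)
    | _, _ => False)

lemma groupInv_unique {n : Type*} [Fintype n] [DecidableEq n] {M X Z : Matrix n n ℝ}
    (hX : IsGroupInv M X) (hZ : IsGroupInv M Z) : X = Z := by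
  obtain ⟨hX1, hX2, hX3⟩ := hX
  obtain ⟨hZ1, hZ2, hZ3⟩ := hZ
  have e1 : X = X * X * M := by
    calc X = X * M * X := hX2.symm
    _ = X * (X * M) := by rw [Matrix.mul_assoc, ← hX3]
    _ = X * X * M := by rw [Matrix.mul_assoc]
  have e2 : X = X * M * Z := by
    calc X = X * X * M := e1
    _ = X * X * (M * Z * M) := by rw [hZ1]
    _ = (X * X * M) * (Z * M) := by noncomm_ring
    _ = X * (Z * M) := by rw [← e1]
    _ = X * (M * Z) := by rw [hZ3]
    _ = X * M * Z := by rw [Matrix.mul_assoc]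
  have e3 : Z = M * Z * Z := by
    calc Z = Z * M * Z := hZ2.symm
    _ = M * Z * Z := by rw [← hZ3]
  have e4 : Z = M * X * Z := by
    calc Z = M * Z * Z := e3
    _ = (M * X * M) * Z * Z := by rw [hX1]
    _ = (M * X) * (M * Z * Z) := by noncomm_ring
    _ = M * X * Z := by rw [← e3]
  calc X = X * M * Z := e2
  _ = M * X * Z := by rw [hX3]
  _ = Z := e4.symm

lemma groupInv_symm {n : Type*} [Fintype n] [DecidableEq n] {M X : Matrix n n ℝ}
    (hM : Mᵀ = M) (hX : IsGroupInv M X) : Xᵀ = X := by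
  refine (groupInv_unique ?_ hX)
  obtain ⟨h1, h2, h3⟩ := hX
  refine ⟨?_, ?_, ?_⟩
  · calc M * Xᵀ * M = (Mᵀ * X * Mᵀ)ᵀ := by simp [Matrix.transpose_mul, Matrix.mul_assoc]
    _ = M := by rw [hM, h1, hM]
  · calc Xᵀ * M * Xᵀ = (X * Mᵀ * X)ᵀ := by simp [Matrix.transpose_mul, Matrix.mul_assoc]
    _ = Xᵀ := by rw [hM, h2]
  · calc M * Xᵀ = (X * Mᵀ)ᵀ := by simp [Matrix.transpose_mul]
    _ = (Mᵀ * X)ᵀ := by rw [hM, h3]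
    _ = Xᵀ * M := by simp [Matrix.transpose_mul, hM]

lemma lap_apply' {V : Type*} [Fintype V] [DecidableEq V] (G : SimpleGraph V) [DecidableRel G.Adj]
    (x : V → ℝ) (a : V) :
    (G.lapMatrix ℝ *ᵥ x) a = ∑ u ∈ G.neighborFinset a, (x a - x u) := by
  rw [G.lapMatrix_mulVec_apply, Finset.sum_sub_distrib, Finset.sum_const,
    SimpleGraph.card_neighborFinset_eq_degree, nsmul_eq_mul]

lemma quad' {n : Type*} [Fintype n] [DecidableEq n] {M X : Matrix n n ℝ}
    (hM : Mᵀ = M) (h1 : M * X * M = M) {w d : n → ℝ} (hw : M *ᵥ w = d) :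
    d ⬝ᵥ (X *ᵥ d) = w ⬝ᵥ d := by
  have hd : d = w ᵥ* M := by rw [← hw, ← hM, Matrix.vecMul_transpose, hM]
  calc d ⬝ᵥ (X *ᵥ d) = (w ᵥ* M) ⬝ᵥ (X *ᵥ d) := by rw [← hd]
  _ = w ⬝ᵥ (M *ᵥ (X *ᵥ d)) := by rw [← Matrix.dotProduct_mulVec, Matrix.mulVec_mulVec]
  _ = w ⬝ᵥ ((M * X * M) *ᵥ w) := by rw [← hw]; simp [Matrix.mulVec_mulVec, Matrix.mul_assoc]
  _ = w ⬝ᵥ d := by rw [h1, hw]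

lemma exists_solution {V : Type*} [Fintype V] [DecidableEq V] (G : SimpleGraph V) [DecidableRel G.Adj]
    (hG : G.Connected) (i j : V) :
    ∃ w : V → ℝ, G.lapMatrix ℝ *ᵥ w = Pi.single i 1 - Pi.single j 1 := by
  classical
  have : Nonempty V := ⟨i⟩
  set T : (V → ℝ) →ₗ[ℝ] (V → ℝ) := Matrix.mulVecLin (G.lapMatrix ℝ)
  set s : (V → ℝ) →ₗ[ℝ] ℝ := ∑ k : V, LinearMap.proj k with hs
  have hsapp : ∀ x : V → ℝ, s x = ∑ k, x k := by
    intro x; simp [hs]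
  have hcol : ∀ l, ∑ k, G.lapMatrix ℝ k l = 0 := by
    intro l
    have h1 : G.lapMatrix ℝ *ᵥ (fun _ => 1) = 0 := G.lapMatrix_mulVec_const_eq_zero
    have h2 := congrFun h1 l
    simp only [Matrix.mulVec, dotProduct, mul_one, Pi.zero_apply] at h2
    calc ∑ k, G.lapMatrix ℝ k l = ∑ k, G.lapMatrix ℝ l k := by
            refine Finset.sum_congr rfl fun k _ => ?_
            have := congrFun (congrFun (G.isSymm_lapMatrix (R := ℝ)).eq k) l
            simpa [Matrix.transpose_apply] using this.symm
    _ = 0 := h2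
  have hle : LinearMap.range T ≤ LinearMap.ker s := by
    rintro _ ⟨x, rfl⟩
    simp only [LinearMap.mem_ker, hsapp]
    simp only [T, Matrix.mulVecLin_apply, Matrix.mulVec, dotProduct]
    rw [Finset.sum_comm]
    simp_rw [← Finset.sum_mul]
    simp [hcol]
  have hker : LinearMap.ker T = Submodule.span ℝ {(fun _ => 1 : V → ℝ)} := by
    ext x
    rw [LinearMap.mem_ker, Submodule.mem_span_singleton]
    constructor
    · intro hx
      have := G.lapMatrix_mulVec_eq_zero_iff_forall_reachable.mp hx
      exact ⟨x i, funext fun k => by simpa using (this k i (hG k i)).symm⟩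
    · rintro ⟨c, rfl⟩
      show G.lapMatrix ℝ *ᵥ (c • fun _ => (1:ℝ)) = 0
      rw [Matrix.mulVec_smul, G.lapMatrix_mulVec_const_eq_zero, smul_zero]
  have hone : (fun _ => (1:ℝ) : V → ℝ) ≠ 0 := by
    intro h; have := congrFun h i; simp at this
  have hkerrank : Module.finrank ℝ (LinearMap.ker T) = 1 := by
    rw [hker, finrank_span_singleton hone]
  have hrange : Module.finrank ℝ (LinearMap.range T) = Fintype.card V - 1 := by
    have := LinearMap.finrank_range_add_finrank_ker T
    rw [hkerrank, Module.finrank_pi] at this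
    omega
  have hssurj : LinearMap.range s = ⊤ := by
    rw [LinearMap.range_eq_top]
    intro c
    exact ⟨fun _ => c / Fintype.card V, by
      rw [hsapp, Finset.sum_const, Finset.card_univ, nsmul_eq_mul]; field_simp⟩
  have hsker : Module.finrank ℝ (LinearMap.ker s) = Fintype.card V - 1 := by
    have := LinearMap.finrank_range_add_finrank_ker s
    rw [hssurj, Module.finrank_pi] at this
    simp [Module.finrank_self] at this
    omega
  have heq : LinearMap.range T = LinearMap.ker s :=
    Submodule.eq_of_le_of_finrank_eq hle (by rw [hrange, hsker])
  have hmem : (Pi.single i 1 - Pi.single j 1 : V → ℝ) ∈ LinearMap.ker s := by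
    rw [LinearMap.mem_ker, hsapp]
    simp [Pi.single_apply, Finset.sum_sub_distrib]
  rw [← heq] at hmem
  obtain ⟨w, hw⟩ := hmem
  exact ⟨w, hw⟩

/-- component projection -/
def cpr {V1 V2 : Type*} (G2 : SimpleGraph V2) : V1 ⊕ (V1 × V2) ⊕ (V1 × G2.edgeSet) → V1 :=
  Sum.elim id (Sum.elim Prod.fst (fun p => p.1))

section adj2
variable {V1 V2 : Type*} (G1 : SimpleGraph V1) (G2 : SimpleGraph V2)

lemma corona_adj_cases {a b : V1 ⊕ (V1 × V2) ⊕ (V1 × G2.edgeSet)}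
    (hab : (coronaVertex G1 G2).Adj a b) :
    (∃ k l, a = Sum.inl k ∧ b = Sum.inl l ∧ G1.Adj k l) ∨ cpr G2 a = cpr G2 b := by
  rw [coronaVertex, SimpleGraph.fromRel_adj] at hab
  obtain ⟨hne, h | h⟩ := hab <;>
  · rcases a with k | ⟨k, v⟩ | ⟨k, e⟩ <;> rcases b with l | ⟨l, v'⟩ | ⟨l, e'⟩ <;>
      simp only [cpr, Sum.elim_inl, Sum.elim_inr, id] at h ⊢ <;>
      first
        | exact h.elim
        | (exact Or.inl ⟨_, _, rfl, rfl, by exact h⟩)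
        | (exact Or.inl ⟨_, _, rfl, rfl, h.symm⟩)
        | (exact Or.inr h)
        | (exact Or.inr h.symm)
        | (exact Or.inr h.1)
        | (exact Or.inr h.1.symm)

lemma corona_adj_inl_inl {k l : V1} (h : G1.Adj k l) :
    (coronaVertex G1 G2).Adj (Sum.inl k) (Sum.inl l) := by
  rw [coronaVertex, SimpleGraph.fromRel_adj]
  exact ⟨by simp [h.ne], Or.inl h⟩

end adj2

/-- In `G1 ◇ G2`, the resistance distance between two vertices of the `G1`-part equals
`(L_{G1}^#)_{ii} + (L_{G1}^#)_{jj} - 2 (L_{G1}^#)_{ij}`, i.e. the resistance distance in `G1`. -/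
theorem stmt15 {V1 V2 : Type*} [Fintype V1] [Fintype V2]
    (G1 : SimpleGraph V1) (G2 : SimpleGraph V2) (hG1 : G1.Connected)
    (X : Matrix (V1 ⊕ (V1 × V2) ⊕ (V1 × G2.edgeSet)) (V1 ⊕ (V1 × V2) ⊕ (V1 × G2.edgeSet)) ℝ)
    (hX : IsGroupInv ((coronaVertex G1 G2).lapMatrix ℝ) X)
    (Y : Matrix V1 V1 ℝ) (hY : IsGroupInv (G1.lapMatrix ℝ) Y) (i j : V1) :
    X (Sum.inl i) (Sum.inl i) + X (Sum.inl j) (Sum.inl j) -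
        2 * X (Sum.inl i) (Sum.inl j) =
      Y i i + Y j j - 2 * Y i j := by
  classical
  obtain ⟨w₀, hw₀⟩ := exists_solution G1 hG1 i j
  have hXsym : Xᵀ = X :=
    groupInv_symm ((coronaVertex G1 G2).isSymm_lapMatrix (R := ℝ)).eq hX
  have hYsym : Yᵀ = Y := groupInv_symm (G1.isSymm_lapMatrix (R := ℝ)).eq hY
  set w : V1 ⊕ (V1 × V2) ⊕ (V1 × G2.edgeSet) → ℝ := fun a => w₀ (cpr G2 a) with hwdef
  set D : V1 ⊕ (V1 × V2) ⊕ (V1 × G2.edgeSet) → ℝ :=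
    Pi.single (Sum.inl i) 1 - Pi.single (Sum.inl j) 1 with hDdef
  have hbig : (coronaVertex G1 G2).lapMatrix ℝ *ᵥ w = D := by
    funext a
    rw [lap_apply']
    match a with
    | Sum.inr b =>
      have hz : ∀ u ∈ (coronaVertex G1 G2).neighborFinset (Sum.inr b),
          w (Sum.inr b) - w u = 0 := by
        intro u hu
        rw [SimpleGraph.mem_neighborFinset] at hu
        rcases corona_adj_cases G1 G2 hu with ⟨k, l, h, _, _⟩ | h
        · exact absurd h (by simp)
        · simp [hwdef, h]
      rw [Finset.sum_eq_zero hz]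
      simp [hDdef, Pi.single_apply]
    | Sum.inl k =>
      have hsub : (G1.neighborFinset k).image Sum.inl ⊆
          (coronaVertex G1 G2).neighborFinset (Sum.inl k) := by
        intro u hu
        simp only [Finset.mem_image, SimpleGraph.mem_neighborFinset] at hu ⊢
        obtain ⟨l, hl, rfl⟩ := hu
        exact corona_adj_inl_inl G1 G2 hl
      have hvanish : ∀ u ∈ (coronaVertex G1 G2).neighborFinset (Sum.inl k),
          u ∉ (G1.neighborFinset k).image Sum.inl → w (Sum.inl k) - w u = 0 := by
        intro u hu hnu
        rw [SimpleGraph.mem_neighborFinset] at hu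
        rcases corona_adj_cases G1 G2 hu with ⟨k', l, hk, rfl, hadj⟩ | h
        · exfalso; apply hnu
          simp only [Finset.mem_image, SimpleGraph.mem_neighborFinset]
          rw [Sum.inl.injEq] at hk
          exact ⟨l, hk ▸ hadj, rfl⟩
        · show w₀ (cpr G2 (Sum.inl k)) - w₀ (cpr G2 u) = 0
          rw [h, sub_self]
      rw [← Finset.sum_subset hsub hvanish,
        Finset.sum_image (fun x _ y _ h => Sum.inl.injEq _ _ ▸ h)]
      have hterm : ∀ l ∈ G1.neighborFinset k,
          w (Sum.inl k) - w (Sum.inl l) = w₀ k - w₀ l := fun l _ => rfl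
      rw [Finset.sum_congr rfl hterm, ← lap_apply', hw₀]
      simp [hDdef, Pi.single_apply, Sum.inl.injEq]
  have h1 : D ⬝ᵥ (X *ᵥ D) = w ⬝ᵥ D :=
    quad' ((coronaVertex G1 G2).isSymm_lapMatrix (R := ℝ)).eq hX.1 hbig
  have h2 : (Pi.single i 1 - Pi.single j 1 : V1 → ℝ) ⬝ᵥ
      (Y *ᵥ (Pi.single i 1 - Pi.single j 1)) =
      w₀ ⬝ᵥ (Pi.single i 1 - Pi.single j 1) :=
    quad' (G1.isSymm_lapMatrix (R := ℝ)).eq hY.1 hw₀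
  have hX1 : D ⬝ᵥ (X *ᵥ D) =
      X (Sum.inl i) (Sum.inl i) + X (Sum.inl j) (Sum.inl j)
        - X (Sum.inl i) (Sum.inl j) - X (Sum.inl j) (Sum.inl i) := by
    rw [hDdef]
    simp only [Matrix.mulVec_sub, Matrix.mulVec_single_one, sub_dotProduct,
      dotProduct_sub, single_dotProduct, Matrix.col_apply, mul_one, one_mul]
    ring
  have hY1 : (Pi.single i 1 - Pi.single j 1 : V1 → ℝ) ⬝ᵥ
      (Y *ᵥ (Pi.single i 1 - Pi.single j 1)) = Y i i + Y j j - Y i j - Y j i := by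
    simp only [Matrix.mulVec_sub, Matrix.mulVec_single_one, sub_dotProduct,
      dotProduct_sub, single_dotProduct, Matrix.col_apply, mul_one, one_mul]
    ring
  have hwD : w ⬝ᵥ D = w₀ i - w₀ j := by
    rw [hDdef]
    simp only [dotProduct_sub, dotProduct_single, mul_one]
    rfl
  have hw0d : w₀ ⬝ᵥ (Pi.single i 1 - Pi.single j 1 : V1 → ℝ) = w₀ i - w₀ j := by
    simp only [dotProduct_sub, dotProduct_single, mul_one]
  have hXji : X (Sum.inl j) (Sum.inl i) = X (Sum.inl i) (Sum.inl j) :=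
    congrFun (congrFun hXsym (Sum.inl i)) (Sum.inl j)
  have hYji : Y j i = Y i j := congrFun (congrFun hYsym i) j
  rw [hX1, hwD] at h1
  rw [hY1, hw0d] at h2
  rw [hXji] at h1
  rw [hYji] at h2
  linarith
end
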